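/- Let m, n, p be positive integers with m ≥ p and n ≥ p, and let α ∈ (0,1) and β > 0 be reals satisfying (n+p+1)·α + m·α·β/(2·(1−α)) ≤ 2·(m−p−1)·β + 2·(m/n)·β. Set A = n+p−3, B = m−p+1, and d_i = n−p+2i−1. Then for all reals f₁ > f₂ > ⋯ > f_p > 0, setting g_i = 1/(1+β·f_i), one has ∑_{i=1}^{p} [ α·g_i·( 4·α·β·(f_i·g_i)² + (α·A + 4·β)·f_i·g_i − 2·B ) − 2·∑_{j≠i} α·g_i²·g_j·((α+β)·f_i + 1) ] + (m/n)·∑_{i=1}^{p} [ −d_i·α·g_i − 2·α·β·f_i·g_i² − 2·α·β·∑_{j=i+1}^{p} f_j·g_i·g_j − n·log(1 − α·g_i) ] ≤ 0. -/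

import Mathlib

open Real Finset


lemma exp_ge_quad (x : ℝ) (hx : 0 ≤ x) : 1 + x + x^2/2 ≤ Real.exp x := by
  have h := Real.sum_le_exp_of_nonneg hx 3
  rw [Finset.sum_range_succ, Finset.sum_range_succ, Finset.sum_range_succ,
    Finset.sum_range_zero] at h
  norm_num [Nat.factorial] at h
  linarith

lemma exp_ge_cubic (x : ℝ) (hx : 0 ≤ x) : 1 + x + x^2/2 + x^3/6 ≤ Real.exp x := by
  have h := Real.sum_le_exp_of_nonneg hx 4
  rw [Finset.sum_range_succ, Finset.sum_range_succ, Finset.sum_range_succ,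
    Finset.sum_range_succ, Finset.sum_range_zero] at h
  norm_num [Nat.factorial] at h
  linarith

lemma logb1 (a : ℝ) (h0 : 0 < a) (h1 : a < 1) : -Real.log (1-a) ≤ a + a^2/(2*(1-a)) := by
  have h1a : 0 < 1 - a := by linarith
  set y := a + a^2/(2*(1-a)) with hy
  have hy0 : 0 ≤ y := by positivity
  have hexp := exp_ge_quad y hy0
  have e : (1-a)*(1+y+y^2/2) - 1 = a^4/(8*(1-a)) := by
    rw [hy]; field_simp; ring
  have hkey : 1 ≤ (1-a)*(1+y+y^2/2) := by
    have : (0:ℝ) ≤ a^4/(8*(1-a)) := div_nonneg (by positivity) (by linarith)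
    linarith
  have h2 : 1 ≤ (1-a) * Real.exp y := by nlinarith [Real.exp_pos y]
  have h3 : Real.exp (-y) ≤ 1 - a := by
    rw [Real.exp_neg]
    nlinarith [Real.exp_pos y, mul_inv_cancel₀ (Real.exp_pos y).ne',
      inv_nonneg.mpr (Real.exp_pos y).le]
  have h4 : -y ≤ Real.log (1-a) := (Real.le_log_iff_exp_le h1a).mpr h3
  linarith

lemma logb2 (a : ℝ) (h0 : 0 < a) (h89 : a ≤ 8/9) :
    -Real.log (1-a) ≤ a*(10-9*a)/(6*(1-a)) := by
  have h1a : 0 < 1 - a := by linarith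
  set y := a*(10-9*a)/(6*(1-a)) with hy
  have hy0 : 0 ≤ y := by
    apply div_nonneg _ (by linarith)
    nlinarith
  have hexp := exp_ge_cubic y hy0
  have e : ((1-a)*(1+y+y^2/2+y^3/6) - 1) * (104976*(1-a)^2)
      = a*(224 + 208*(8-9*a) + 344*(8-9*a)^2 + (8-9*a)^3*(((8-9*a)-14)^2 + 54)) := by
    rw [hy]; field_simp; ring
  have hb : (0:ℝ) ≤ 8 - 9*a := by linarith
  have hR : 0 ≤ a*(224 + 208*(8-9*a) + 344*(8-9*a)^2 + (8-9*a)^3*(((8-9*a)-14)^2 + 54)) := by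
    have h3 : (0:ℝ) ≤ (8-9*a)^3 := by positivity
    have h4 : (0:ℝ) ≤ ((8-9*a)-14)^2 + 54 := by positivity
    have h2 : (0:ℝ) ≤ (8-9*a)^2 := sq_nonneg _
    nlinarith [mul_nonneg h3 h4]
  have hkey : 1 ≤ (1-a)*(1+y+y^2/2+y^3/6) := by nlinarith [sq_nonneg (1-a)]
  have h2 : 1 ≤ (1-a) * Real.exp y := by nlinarith [Real.exp_pos y]
  have h3 : Real.exp (-y) ≤ 1 - a := by
    rw [Real.exp_neg]
    nlinarith [Real.exp_pos y, mul_inv_cancel₀ (Real.exp_pos y).ne',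
      inv_nonneg.mpr (Real.exp_pos y).le]
  have h4 : -y ≤ Real.log (1-a) := (Real.le_log_iff_exp_le h1a).mpr h3
  linarith

lemma log_chord (a t : ℝ) (h0 : 0 < a) (h1 : a < 1) (ht0 : 0 ≤ t) (ht1 : t ≤ 1) :
    t * Real.log (1-a) ≤ Real.log (1 - a*t) := by
  have hmem1 : (1:ℝ) ∈ Set.Ioi (0:ℝ) := by norm_num
  have hmem2 : (1-a) ∈ Set.Ioi (0:ℝ) := by simp; linarith
  have h := (strictConcaveOn_log_Ioi.concaveOn).2 hmem1 hmem2
    (by linarith : (0:ℝ) ≤ 1 - t) ht0 (by ring)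
  simp only [smul_eq_mul, Real.log_one, mul_one] at h
  have e : 1 - t + t * (1-a) = 1 - a*t := by ring
  rw [e] at h
  linarith

set_option maxHeartbeats 1000000 in
lemma scalarK (M N P α β t : ℝ) (hP : 1 ≤ P) (hPM : P ≤ M) (hPN : P ≤ N)
    (hα0 : 0 < α) (hα1 : α < 1) (hβ : 0 < β)
    (hc : (N+P+1)*α + M*α*β/(2*(1-α)) ≤ 2*(M-P-1)*β + 2*(M/N)*β)
    (ht0 : 0 ≤ t) (ht1 : t ≤ 1) :
    (α*(N+P+1)/β + 4)*(1-t) - 2*(M-P+1)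
      + M*((-Real.log (1-α) - α)/α) - 2*(M/N)*(1-t) ≤ 0 := by
  have h1a : (0:ℝ) < 1 - α := by linarith
  have hM0 : (0:ℝ) < M := by linarith
  have hN0 : (0:ℝ) < N := by linarith
  set L : ℝ := -Real.log (1-α) with hL
  set ψ : ℝ := (L - α)/α with hψ
  set s : ℝ := α/(2*(1-α)) with hs
  set X : ℝ := α*(N+P+1)/β with hX
  have hs0 : 0 ≤ s := by positivity
  have hX0 : 0 < X := by
    apply div_pos (by nlinarith) hβ
  -- constraint divided by β
  have hC : X + M*s ≤ 2*(M-P-1) + 2*(M/N) := by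
    rw [← mul_le_mul_iff_of_pos_right hβ]
    have e1 : (X + M*s)*β = (N+P+1)*α + M*α*β/(2*(1-α)) := by
      rw [hX, hs]; field_simp
    rw [e1]
    calc (N+P+1)*α + M*α*β/(2*(1-α)) ≤ 2*(M-P-1)*β + 2*(M/N)*β := hc
    _ = (2*(M-P-1) + 2*(M/N))*β := by ring
  -- ψ ≤ s
  have hψs : ψ ≤ s := by
    have h := logb1 α hα0 hα1
    rw [hψ, div_le_iff₀ hα0]
    have e : s*α = α^2/(2*(1-α)) := by rw [hs]; field_simp
    rw [e]; linarith
  -- goal restated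
  have egoal : (X + 4)*(1-t) - 2*(M-P+1) + M*ψ - 2*(M/N)*(1-t)
      = (1-t)*(X + 4 - 2*(M/N)) - 2*(M-P+1) + M*ψ := by ring
  have hc2 : X + 4 - 2*(M/N) ≤ 2*(M-P+1) - M*s := by linarith
  rcases le_or_gt (M*s) (2*(M-P+1)) with hcase | hcase
  · -- case 1
    have h2 : (1-t)*(X + 4 - 2*(M/N)) ≤ 2*(M-P+1) - M*s := by
      nlinarith [mul_le_mul_of_nonneg_left hc2 (by linarith : (0:ℝ) ≤ 1-t)]
    have h3 : M*ψ ≤ M*s := mul_le_mul_of_nonneg_left hψs hM0.le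
    rw [hψ] at egoal ⊢
    linarith [egoal, h2, h3]
  · -- case 2 : M*s > 2*(M-P+1)
    have hMs : M*s ≤ 2*(M-P-1) + 2*(M/N) := by linarith
    have hw : M/N * N = M := div_mul_cancel₀ _ hN0.ne'
    have hw2 : 2 < M/N := by nlinarith
    -- s ≤ 4
    have hMNle : M/N ≤ M := by
      rw [div_le_iff₀ hN0]; nlinarith
    have hs4 : s ≤ 4 := by nlinarith
    have hα89 : α ≤ 8/9 := by
      rw [hs] at hs4
      rw [div_le_iff₀ (by linarith : (0:ℝ) < 2*(1-α))] at hs4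
      linarith
    -- ψ ≤ (s+2)/3
    have hψ2 : ψ ≤ (s+2)/3 := by
      have h := logb2 α hα0 hα89
      rw [hψ, div_le_iff₀ hα0]
      have e : (s+2)/3*α = α*(10-9*α)/(6*(1-α)) - α := by
        rw [hs]; field_simp; ring
      rw [e]; linarith
    -- M*(s+2)/3 ≤ 2*(M-P+1)
    have hkey : M*s + 2*M ≤ 6*(M-P+1) := by
      have h6 : (M/N - 2)*(N - 1) ≥ 0 :=
        mul_nonneg (by linarith) (by linarith)
      nlinarith
    have h3 : M*ψ ≤ M*((s+2)/3) := mul_le_mul_of_nonneg_left hψ2 hM0.le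
    have h2 : (1-t)*(X + 4 - 2*(M/N)) ≤ 0 :=
      mul_nonpos_of_nonneg_of_nonpos (by linarith) (by linarith)
    rw [hψ] at egoal ⊢
    nlinarith [egoal, h2, h3, hkey]

lemma cheb (p : ℕ) (hp : 0 < p) (g : Fin p → ℝ)
    (hmono : ∀ i j : Fin p, i ≤ j → g i ≤ g j) :
    ∑ i : Fin p, ((p:ℝ) - 1 - 2*((i:ℕ):ℝ)) * g i ≤ 0 := by
  set c : Fin p → ℝ := fun i => (p:ℝ) - 1 - 2*((i:ℕ):ℝ) with hc
  have hsum0 : ∑ i : Fin p, c i = 0 := by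
    have h1 : ∑ i : Fin p, ((i:ℕ):ℝ) = (p:ℝ)*((p:ℝ)-1)/2 := by
      rw [Fin.sum_univ_eq_sum_range (fun k => ((k:ℕ):ℝ)) p]
      have h2 := Finset.sum_range_id_mul_two p
      have h4 : ((∑ i ∈ Finset.range p, i : ℕ) : ℝ) * 2 = ((p * (p-1) : ℕ) : ℝ) := by
        exact_mod_cast congrArg (Nat.cast : ℕ → ℝ) h2
      have h5 : ((p * (p-1) : ℕ) : ℝ) = (p:ℝ)*((p:ℝ)-1) := by
        push_cast [Nat.cast_sub (by omega : 1 ≤ p)]; ring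
      have h6 : (∑ i ∈ Finset.range p, ((i:ℕ):ℝ)) = ((∑ i ∈ Finset.range p, i : ℕ) : ℝ) := by
        push_cast; rfl
      rw [h6]; linarith
    simp only [hc, sub_mul, Finset.sum_sub_distrib, Finset.sum_const, Finset.card_univ,
      Fintype.card_fin, nsmul_eq_mul, ← Finset.mul_sum]
    rw [h1]; ring
  have e1 : ∀ i : Fin p, ∑ j : Fin p, (c i - c j)*(g i - g j)
      = (p:ℝ)*(c i*g i) - c i*(∑ j, g j) - (∑ j, c j)*g i + (∑ j, c j*g j) := by
    intro i
    have : ∀ j : Fin p, (c i - c j)*(g i - g j)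
        = c i*g i - c i*g j - c j*g i + c j*g j := fun j => by ring
    rw [Finset.sum_congr rfl (fun j _ => this j)]
    simp only [Finset.sum_add_distrib, Finset.sum_sub_distrib, Finset.sum_const,
      Finset.card_univ, Fintype.card_fin, nsmul_eq_mul, ← Finset.mul_sum, ← Finset.sum_mul]
  have hdouble : ∑ i : Fin p, ∑ j : Fin p, (c i - c j)*(g i - g j)
      = 2*(p:ℝ)*(∑ i, c i * g i) - 2*(∑ i, c i)*(∑ i, g i) := by
    rw [Finset.sum_congr rfl (fun i _ => e1 i)]
    simp only [Finset.sum_add_distrib, Finset.sum_sub_distrib, Finset.sum_const,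
      Finset.card_univ, Fintype.card_fin, nsmul_eq_mul, ← Finset.mul_sum, ← Finset.sum_mul]
    ring
  have hneg : ∑ i : Fin p, ∑ j : Fin p, (c i - c j)*(g i - g j) ≤ 0 := by
    apply Finset.sum_nonpos
    intro i _
    apply Finset.sum_nonpos
    intro j _
    have hcc : c i - c j = 2*(((j:ℕ):ℝ) - ((i:ℕ):ℝ)) := by rw [hc]; ring
    rcases le_total i j with h | h
    · apply mul_nonpos_of_nonneg_of_nonpos
      · rw [hcc]
        have : ((i:ℕ):ℝ) ≤ ((j:ℕ):ℝ) := by exact_mod_cast (Fin.le_iff_val_le_val.mp h)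
        linarith
      · linarith [hmono i j h]
    · apply mul_nonpos_of_nonpos_of_nonneg
      · rw [hcc]
        have : ((j:ℕ):ℝ) ≤ ((i:ℕ):ℝ) := by exact_mod_cast (Fin.le_iff_val_le_val.mp h)
        linarith
      · linarith [hmono j i h]
  have hp' : (0:ℝ) < (p:ℝ) := by exact_mod_cast hp
  show ∑ i : Fin p, c i * g i ≤ 0
  have h9 : 2*(p:ℝ)*(∑ i : Fin p, c i * g i) ≤ 0 := by
    rw [hsum0] at hdouble; linarith
  nlinarith [h9, hp']

set_option maxHeartbeats 1000000 in
/-- Theorem 4.4 (deterministic content): for `m ≥ p`, `n ≥ p`, `α ∈ (0,1)` and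
`β > 0` with `(n+p+1)α + mαβ/(2(1−α)) ≤ 2(m−p−1)β + 2(m/n)β`, the unbiased
estimate `2Δ̂` of (twice) the Kullback–Leibler risk difference of the pair
`(Θ̂^G, Σ̂^{G2})` from `(X, S/n)` is nonpositive. -/
theorem stmt_17 (m n p : ℕ) (hp : 0 < p) (hmp : m ≥ p) (hn : n ≥ p)
    (α β : ℝ) (hα0 : 0 < α) (hα1 : α < 1) (hβ : 0 < β)
    (hαβ : ((n : ℝ) + p + 1) * α + (m : ℝ) * α * β / (2 * (1 - α))
      ≤ 2 * ((m : ℝ) - p - 1) * β + 2 * ((m : ℝ) / n) * β)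
    (A B : ℝ) (hA : A = (n : ℝ) + p - 3) (hB : B = (m : ℝ) - p + 1)
    (f : Fin p → ℝ) (hfpos : ∀ i, 0 < f i) (hfdec : ∀ i j : Fin p, i < j → f j < f i)
    (g : Fin p → ℝ) (hg : ∀ i, g i = 1 / (1 + β * f i))
    (d : Fin p → ℝ) (hd : ∀ i, d i = (n : ℝ) - p + 2 * ((i : ℕ) + 1) - 1) :
    (∑ i : Fin p,
        (α * g i * (4 * α * β * (f i * g i) ^ 2 + (α * A + 4 * β) * (f i * g i) - 2 * B)
          - 2 * ∑ j ∈ Finset.univ.erase i, α * g i ^ 2 * g j * ((α + β) * f i + 1)))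
      + ((m : ℝ) / n) * ∑ i : Fin p,
          (-(d i) * α * g i - 2 * α * β * f i * g i ^ 2
            - 2 * α * β * ∑ j ∈ Finset.univ.filter (fun j => i < j), f j * g i * g j
            - n * Real.log (1 - α * g i)) ≤ 0 := by
  have hp1 : (1:ℝ) ≤ (p:ℝ) := by exact_mod_cast hp
  have hPM : (p:ℝ) ≤ (m:ℝ) := by exact_mod_cast hmp
  have hPN : (p:ℝ) ≤ (n:ℝ) := by exact_mod_cast hn
  have hn0 : (0:ℝ) < (n:ℝ) := by linarith
  have hm0 : (0:ℝ) < (m:ℝ) := by linarith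
  have h1a : (0:ℝ) < 1 - α := by linarith
  have hgpos : ∀ i, 0 < g i := fun i => by
    rw [hg i]; have := hfpos i; positivity
  have hg1 : ∀ i, g i < 1 := fun i => by
    rw [hg i, div_lt_one (by nlinarith [hfpos i])]
    nlinarith [hfpos i]
  have hfg : ∀ i, β * (f i * g i) = 1 - g i := fun i => by
    have h1 : (0:ℝ) < 1 + β * f i := by nlinarith [hfpos i]
    rw [hg i]; field_simp; ring
  have hmono : ∀ i j : Fin p, i ≤ j → g i ≤ g j := by
    intro i j hij
    rcases eq_or_lt_of_le hij with h | h
    · rw [h]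
    · rw [hg i, hg j]
      apply one_div_le_one_div_of_le (by nlinarith [hfpos j])
      nlinarith [hfdec i j h]
  -- Step A
  have hstepA : ∀ i : Fin p,
      α * g i * (4 * α * β * (f i * g i) ^ 2 + (α * A + 4 * β) * (f i * g i) - 2 * B)
        - 2 * ∑ j ∈ Finset.univ.erase i, α * g i ^ 2 * g j * ((α + β) * f i + 1)
      ≤ α * g i * ((α*((n:ℝ)+(p:ℝ)+1)/β + 4)*(1 - g i) - 2 * B) := by
    intro i
    have ht0 : (0:ℝ) ≤ f i * g i := le_of_lt (mul_pos (hfpos i) (hgpos i))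
    have e2 : (α*((n:ℝ)+(p:ℝ)+1)/β) * (1 - g i) = α*((n:ℝ)+(p:ℝ)+1)*(f i * g i) := by
      rw [← hfg i]; field_simp
    have e3 : 4 * α * β * (f i * g i) ^ 2 + (α * A + 4 * β) * (f i * g i)
        - (α*((n:ℝ)+(p:ℝ)+1)/β + 4)*(1 - g i)
        = -(4*α*(f i * g i)*(g i)) := by
      rw [hA]
      linear_combination (4*α*(f i * g i) + 4) * hfg i - e2
    have hQ : 4 * α * β * (f i * g i) ^ 2 + (α * A + 4 * β) * (f i * g i)
        ≤ (α*((n:ℝ)+(p:ℝ)+1)/β + 4)*(1 - g i) := by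
      nlinarith [e3, mul_nonneg (mul_nonneg hα0.le ht0) (hgpos i).le]
    have hcross : (0:ℝ) ≤ ∑ j ∈ Finset.univ.erase i, α * g i ^ 2 * g j * ((α + β) * f i + 1) := by
      apply Finset.sum_nonneg
      intro j _
      have h1 : (0:ℝ) ≤ (α + β) * f i + 1 := by nlinarith [hfpos i]
      have h2 := (hgpos j).le
      positivity
    have h3 : α * g i * (4 * α * β * (f i * g i) ^ 2 + (α * A + 4 * β) * (f i * g i) - 2 * B)
        ≤ α * g i * ((α*((n:ℝ)+(p:ℝ)+1)/β + 4)*(1 - g i) - 2 * B) := by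
      apply mul_le_mul_of_nonneg_left _ (mul_nonneg hα0.le (hgpos i).le)
      linarith
    linarith
  -- Step B
  have hstepB : ∀ i : Fin p,
      -(d i) * α * g i - 2 * α * β * f i * g i ^ 2
        - 2 * α * β * ∑ j ∈ Finset.univ.filter (fun j => i < j), f j * g i * g j
        - n * Real.log (1 - α * g i)
      ≤ α * ((n:ℝ) - d i) * g i
        + ((n:ℝ) * α * ((-Real.log (1-α) - α)/α) * g i - 2 * α * g i * (1 - g i)) := by
    intro i
    have hfg2 : 2 * α * β * f i * g i ^ 2 = 2 * α * g i * (1 - g i) := by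
      linear_combination (2*α*(g i)) * hfg i
    have hsum3 : (0:ℝ) ≤ ∑ j ∈ Finset.univ.filter (fun j => i < j), f j * g i * g j := by
      apply Finset.sum_nonneg
      intro j _
      exact le_of_lt (mul_pos (mul_pos (hfpos j) (hgpos i)) (hgpos j))
    have hsum3' : (0:ℝ) ≤ 2 * α * β * ∑ j ∈ Finset.univ.filter (fun j => i < j), f j * g i * g j := by
      apply mul_nonneg (by positivity) hsum3
    have hchord := log_chord α (g i) hα0 hα1 (hgpos i).le (hg1 i).le
    have hlog : -((n:ℝ) * Real.log (1 - α * g i)) ≤ (n:ℝ) * (g i * (-Real.log (1-α))) := by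
      have h5 : -Real.log (1 - α * g i) ≤ g i * (-Real.log (1-α)) := by linarith
      nlinarith [mul_le_mul_of_nonneg_left h5 hn0.le]
    have hαψ : α * ((-Real.log (1-α) - α)/α) = -Real.log (1-α) - α := by
      field_simp
    have e6 : (n:ℝ) * g i * (α * ((-Real.log (1-α) - α)/α))
        = (n:ℝ) * g i * (-Real.log (1-α) - α) := by rw [hαψ]
    nlinarith [hfg2, hsum3', hlog, e6]
  -- Chebyshev part
  have hcheb2 : ∑ i : Fin p, α * ((n:ℝ) - d i) * g i ≤ 0 := by
    have h4 : ∑ i : Fin p, α * ((n:ℝ) - d i) * g i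
        = α * ∑ i : Fin p, ((p:ℝ) - 1 - 2*((i:ℕ):ℝ)) * g i := by
      rw [Finset.mul_sum]
      apply Finset.sum_congr rfl
      intro i _
      rw [hd i]; push_cast; ring
    rw [h4]
    exact mul_nonpos_of_nonneg_of_nonpos hα0.le (cheb p hp g hmono)
  -- per-index nonpositive
  have hmain : ∀ i : Fin p,
      α * g i * ((α*((n:ℝ)+(p:ℝ)+1)/β + 4)*(1 - g i) - 2 * B)
        + ((m:ℝ)/n) * ((n:ℝ) * α * ((-Real.log (1-α) - α)/α) * g i - 2 * α * g i * (1 - g i))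
      ≤ 0 := by
    intro i
    have hscal := scalarK (m:ℝ) (n:ℝ) (p:ℝ) α β (g i) hp1 hPM hPN hα0 hα1 hβ hαβ
      (hgpos i).le (hg1 i).le
    have e5 : α * g i * ((α*((n:ℝ)+(p:ℝ)+1)/β + 4)*(1 - g i) - 2 * B)
        + ((m:ℝ)/n) * ((n:ℝ) * α * ((-Real.log (1-α) - α)/α) * g i - 2 * α * g i * (1 - g i))
        = (α * g i) * ((α*((n:ℝ)+(p:ℝ)+1)/β + 4)*(1 - g i) - 2*((m:ℝ)-(p:ℝ)+1)
            + (m:ℝ)*((-Real.log (1-α) - α)/α) - 2*((m:ℝ)/(n:ℝ))*(1 - g i)) := by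
      rw [hB]; field_simp; ring
    rw [e5]
    exact mul_nonpos_of_nonneg_of_nonpos (mul_nonneg hα0.le (hgpos i).le) hscal
  -- assemble
  have hS1 : ∑ i : Fin p,
        (α * g i * (4 * α * β * (f i * g i) ^ 2 + (α * A + 4 * β) * (f i * g i) - 2 * B)
          - 2 * ∑ j ∈ Finset.univ.erase i, α * g i ^ 2 * g j * ((α + β) * f i + 1))
      ≤ ∑ i : Fin p, α * g i * ((α*((n:ℝ)+(p:ℝ)+1)/β + 4)*(1 - g i) - 2 * B) :=
    Finset.sum_le_sum (fun i _ => hstepA i)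
  have hS2 : ((m:ℝ)/n) * ∑ i : Fin p,
          (-(d i) * α * g i - 2 * α * β * f i * g i ^ 2
            - 2 * α * β * ∑ j ∈ Finset.univ.filter (fun j => i < j), f j * g i * g j
            - n * Real.log (1 - α * g i))
      ≤ ((m:ℝ)/n) * ∑ i : Fin p,
          (α * ((n:ℝ) - d i) * g i
            + ((n:ℝ) * α * ((-Real.log (1-α) - α)/α) * g i - 2 * α * g i * (1 - g i))) := by
    apply mul_le_mul_of_nonneg_left (Finset.sum_le_sum (fun i _ => hstepB i)) (by positivity)
  have hsplit : ((m:ℝ)/n) * ∑ i : Fin p,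
          (α * ((n:ℝ) - d i) * g i
            + ((n:ℝ) * α * ((-Real.log (1-α) - α)/α) * g i - 2 * α * g i * (1 - g i)))
      = ((m:ℝ)/n) * (∑ i : Fin p, α * ((n:ℝ) - d i) * g i)
        + ∑ i : Fin p, ((m:ℝ)/n) * ((n:ℝ) * α * ((-Real.log (1-α) - α)/α) * g i
            - 2 * α * g i * (1 - g i)) := by
    simp only [Finset.sum_add_distrib, mul_add, Finset.mul_sum]
  have hfinal : ∑ i : Fin p, α * g i * ((α*((n:ℝ)+(p:ℝ)+1)/β + 4)*(1 - g i) - 2 * B)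
      + ∑ i : Fin p, ((m:ℝ)/n) * ((n:ℝ) * α * ((-Real.log (1-α) - α)/α) * g i
          - 2 * α * g i * (1 - g i)) ≤ 0 := by
    rw [← Finset.sum_add_distrib]
    apply Finset.sum_nonpos
    intro i _
    exact hmain i
  have hchebm : ((m:ℝ)/n) * (∑ i : Fin p, α * ((n:ℝ) - d i) * g i) ≤ 0 :=
    mul_nonpos_of_nonneg_of_nonpos (by positivity) hcheb2
  linarith [hS1, hS2, hsplit, hfinal, hchebm]
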